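/- With the one-soliton data, the bilinear equation (D_x² + r²σ)(f·f) = σ(|g₁|² + |g₂|²) holds identically in (x,t), where D_x²(f·f) = 2(f_{xx}f - f_x²). -/

import Mathlib

/-- One-soliton verification of the bilinear equation
`(D_x² + r²σ)(f·f) = σ(|g₁|² + |g₂|²)`, where `D_x²(f·f) = 2(f_{xx}f - f_x²)`. -/
theorem stmt6 (k₁ η₁₀ : ℂ) (p r σ μ lam φ₀ : ℝ)
    (hk : k₁.re ≠ 0) (hσ : σ ≠ 0) (hp : p ≠ 0)
    (hpk : (p : ℂ) ^ 2 + k₁ ^ 2 ≠ 0)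
    (C : ℝ) (hC : C = 2 / σ + 4 * p ^ 2 * r ^ 2 / ‖(p : ℂ) ^ 2 + k₁ ^ 2‖ ^ 2)
    (hCpos : 0 < C)
    (a : ℂ) (ha : a = 1 / ((k₁ + (starRingEnd ℂ) k₁) ^ 2 * (C : ℂ)))
    (b : ℂ) (hb : b = ((k₁ - Complex.I * p) * ((starRingEnd ℂ) k₁ - Complex.I * p)) /
      ((k₁ + Complex.I * p) * ((starRingEnd ℂ) k₁ + Complex.I * p)))
    (η₁ : ℝ → ℝ → ℂ)
    (hη : ∀ x t : ℝ, η₁ x t = k₁ * x + (((μ + lam : ℝ) : ℂ) / k₁) * t + η₁₀)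
    (φ : ℝ → ℝ → ℝ)
    (hφ : ∀ x t : ℝ, φ x t = p * x - ((μ + lam) / p) * t + φ₀)
    (g₁ g₂ f : ℝ → ℝ → ℂ)
    (hg₁ : ∀ x t : ℝ, g₁ x t = Complex.exp (η₁ x t))
    (hg₂ : ∀ x t : ℝ, g₂ x t = (r : ℂ) * Complex.exp (Complex.I * (φ x t : ℂ)) *
      (1 + a * b * Complex.exp (η₁ x t + (starRingEnd ℂ) (η₁ x t))))
    (hf : ∀ x t : ℝ, f x t = 1 + a * Complex.exp (η₁ x t + (starRingEnd ℂ) (η₁ x t))) :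
    ∀ x t : ℝ,
      2 * (deriv (fun x' => deriv (fun x'' => f x'' t) x') x * f x t
            - (deriv (fun x' => f x' t) x) ^ 2)
        + ((r ^ 2 * σ : ℝ) : ℂ) * (f x t) ^ 2
      = (σ : ℂ) * (g₁ x t * (starRingEnd ℂ) (g₁ x t) + g₂ x t * (starRingEnd ℂ) (g₂ x t)) := by
  intro x t
  set k₂ := (starRingEnd ℂ) k₁ with hk₂
  set K : ℂ := k₁ + k₂ with hK
  set z : ℂ := (p : ℂ) ^ 2 + k₁ ^ 2 with hzdef
  have hk₁0 : k₁ ≠ 0 := fun h => hk (by simp [h])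
  have hK0 : K ≠ 0 := by
    rw [hK, hk₂, Complex.add_conj]
    exact_mod_cast fun h => hk (by exact_mod_cast (mul_eq_zero.mp (by exact_mod_cast h)).resolve_left two_ne_zero)
  have hKconj : (starRingEnd ℂ) K = K := by rw [hK, hk₂]; simp [add_comm]
  have hz0 : z ≠ 0 := hpk
  have hzb0 : (starRingEnd ℂ) z ≠ 0 := by simpa using hz0
  have hσc : (σ : ℂ) ≠ 0 := Complex.ofReal_ne_zero.mpr hσ
  have hCc0 : (C : ℂ) ≠ 0 := Complex.ofReal_ne_zero.mpr hCpos.ne'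
  have hpc : (p : ℂ) ≠ 0 := Complex.ofReal_ne_zero.mpr hp
  -- factorizations
  set N : ℂ := (k₁ - Complex.I * p) * (k₂ - Complex.I * p) with hN
  set D : ℂ := (k₁ + Complex.I * p) * (k₂ + Complex.I * p) with hD
  clear_value k₂ K z N D
  have hfac1 : (k₁ - Complex.I * p) * (k₁ + Complex.I * p) = z := by
    rw [hzdef]; linear_combination (-(p:ℂ)^2) * Complex.I_sq
  have hfac2 : (k₂ - Complex.I * p) * (k₂ + Complex.I * p) = (starRingEnd ℂ) z := by
    rw [hzdef, hk₂]; simp only [map_add, map_pow, Complex.conj_ofReal]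
    linear_combination (-(p:ℂ)^2) * Complex.I_sq
  have hND : N * D = z * (starRingEnd ℂ) z := by
    rw [hN, hD]; linear_combination ((k₂ - Complex.I * p) * (k₂ + Complex.I * p)) * hfac1 + z * hfac2
  have hNDsum : N + D = 2 * (k₁ * k₂ - (p:ℂ)^2) := by
    rw [hN, hD]; linear_combination (2*(p:ℂ)^2) * Complex.I_sq
  have h10 : (k₁ - Complex.I * p) ≠ 0 := left_ne_zero_of_mul (hfac1 ▸ hz0)
  have h20 : (k₁ + Complex.I * p) ≠ 0 := right_ne_zero_of_mul (hfac1 ▸ hz0)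
  have h30 : (k₂ - Complex.I * p) ≠ 0 := left_ne_zero_of_mul (hfac2 ▸ hzb0)
  have h40 : (k₂ + Complex.I * p) ≠ 0 := right_ne_zero_of_mul (hfac2 ▸ hzb0)
  have hN0 : N ≠ 0 := by rw [hN]; exact mul_ne_zero h10 h30
  have hD0 : D ≠ 0 := by rw [hD]; exact mul_ne_zero h20 h40
  have hbval : b = N / D := by rw [hb, hN, hD]
  have hNc : (starRingEnd ℂ) N = D := by
    rw [hN, hD, hk₂]
    simp only [map_mul, map_sub, map_add, Complex.conj_conj, Complex.conj_I, Complex.conj_ofReal]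
    ring
  have hDc : (starRingEnd ℂ) D = N := by
    rw [hN, hD, hk₂]
    simp only [map_mul, map_sub, map_add, Complex.conj_conj, Complex.conj_I, Complex.conj_ofReal]
    ring
  have hconjb : (starRingEnd ℂ) b = D / N := by rw [hbval, map_div₀, hNc, hDc]
  have h1 : b * (starRingEnd ℂ) b = 1 := by
    rw [hconjb, hbval]; field_simp
  have hconja : (starRingEnd ℂ) a = a := by
    rw [ha, map_div₀, map_one, map_mul, map_pow, hKconj, Complex.conj_ofReal]
  -- cast of C
  have habs : ((‖z‖ : ℝ) : ℂ) ^ 2 = z * (starRingEnd ℂ) z := by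
    rw [Complex.mul_conj]
    norm_cast
    exact Complex.sq_norm z
  have hCc : (C : ℂ) = 2 / (σ : ℂ) + 4 * (p:ℂ) ^ 2 * (r:ℂ) ^ 2 / (z * (starRingEnd ℂ) z) := by
    rw [← habs, hC]
    push_cast
    ring
  have hsum : b + (starRingEnd ℂ) b = ((N + D) ^ 2 - 2 * (z * (starRingEnd ℂ) z)) / (z * (starRingEnd ℂ) z) := by
    rw [hconjb, hbval, ← hND]
    field_simp
    ring
  have hzz : z * (starRingEnd ℂ) z = (p:ℂ)^2 * K^2 + (k₁ * k₂ - (p:ℂ)^2)^2 := by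
    rw [hzdef, hK, hk₂]
    simp only [map_add, map_pow, Complex.conj_ofReal]
    ring
  have hT'0 : z * (starRingEnd ℂ) z ≠ 0 := mul_ne_zero hz0 hzb0
  have haK : a * (K ^ 2 * (C:ℂ)) = 1 := by rw [ha]; field_simp
  have hCrel : (C:ℂ) * (σ:ℂ) * (z * (starRingEnd ℂ) z)
      = 2 * (z * (starRingEnd ℂ) z) + 4 * (σ:ℂ) * (p:ℂ)^2 * (r:ℂ)^2 := by
    rw [hCc]
    field_simp
  have hbrel : (b + (starRingEnd ℂ) b) * (z * (starRingEnd ℂ) z)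
      = (N + D)^2 - 2 * (z * (starRingEnd ℂ) z) := by
    rw [hconjb, hbval, ← hND]
    field_simp
    ring
  have hH0 : 2 * K^2 + 2 * (r:ℂ)^2 * (σ:ℂ)
      = (σ:ℂ) * K^2 * (C:ℂ) + (σ:ℂ) * (r:ℂ)^2 * (b + (starRingEnd ℂ) b) := by
    refine mul_right_cancel₀ hT'0 ?_
    linear_combination (-(K^2)) * hCrel - (σ:ℂ)*(r:ℂ)^2 * hbrel
      - (σ:ℂ)*(r:ℂ)^2*((N + D) + 2*(k₁*k₂ - (p:ℂ)^2)) * hNDsum + 4*(σ:ℂ)*(r:ℂ)^2 * hzz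
  have h2 : 2 * a * K ^ 2 + 2 * (r:ℂ) ^ 2 * (σ:ℂ) * a = (σ:ℂ) + (σ:ℂ) * (r:ℂ) ^ 2 * a * (b + (starRingEnd ℂ) b) := by
    linear_combination (σ:ℂ) * haK + a * hH0
  -- the exponent
  set m : ℂ := ((μ + lam : ℝ) : ℂ) with hm
  set w : ℂ := (m / k₁ + (starRingEnd ℂ) (m / k₁)) * t + (η₁₀ + (starRingEnd ℂ) η₁₀) with hw
  clear_value m w
  have hexp : ∀ x' : ℝ, η₁ x' t + (starRingEnd ℂ) (η₁ x' t) = K * x' + w := by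
    intro x'
    rw [hη, hw, hK, hk₂, hm]
    simp only [map_add, map_mul, map_div₀, Complex.conj_ofReal, Complex.conj_conj]
    push_cast
    ring
  have hwconj : (starRingEnd ℂ) (K * x + w) = K * x + w := by
    rw [hw]
    simp only [map_add, map_mul, map_div₀, Complex.conj_ofReal, Complex.conj_conj, hKconj]
    ring
  -- derivatives
  have hfe : (fun x' : ℝ => f x' t) = fun x' : ℝ => 1 + a * Complex.exp (K * x' + w) := by
    funext x'; rw [hf, hexp]
  have hdexp : ∀ x' : ℝ, HasDerivAt (fun u : ℝ => Complex.exp (K * u + w)) (K * Complex.exp (K * x' + w)) x' := by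
    intro x'
    have h0 : HasDerivAt (fun u : ℝ => K * (u : ℂ) + w) K x' := by
      simpa using ((Complex.ofRealCLM.hasDerivAt (x := x')).const_mul K).add_const w
    simpa [mul_comm] using h0.cexp
  have hd1 : ∀ x' : ℝ, HasDerivAt (fun u : ℝ => f u t) (a * K * Complex.exp (K * x' + w)) x' := by
    intro x'
    rw [hfe]
    simpa [mul_assoc] using ((hdexp x').const_mul a).const_add 1
  have hderiv1 : deriv (fun x' => f x' t) x = a * K * Complex.exp (K * x + w) := (hd1 x).deriv
  have hderivfun : (fun x' : ℝ => deriv (fun x'' => f x'' t) x') = fun x' : ℝ => a * K * Complex.exp (K * x' + w) := by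
    funext x'; exact (hd1 x').deriv
  have hderiv2 : deriv (fun x' => deriv (fun x'' => f x'' t) x') x = a * K * K * Complex.exp (K * x + w) := by
    rw [hderivfun]
    have := ((hdexp x).const_mul (a * K))
    simpa [mul_assoc] using this.deriv
  -- conjugates of g's
  have hg1c : g₁ x t * (starRingEnd ℂ) (g₁ x t) = Complex.exp (K * x + w) := by
    rw [hg₁, ← Complex.exp_conj, ← Complex.exp_add, hexp]
  have hphiconj : Complex.exp (Complex.I * (φ x t : ℂ)) * (starRingEnd ℂ) (Complex.exp (Complex.I * (φ x t : ℂ))) = 1 := by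
    rw [← Complex.exp_conj, ← Complex.exp_add]
    simp [Complex.conj_ofReal]
  have hEconj : (starRingEnd ℂ) (Complex.exp (K * x + w)) = Complex.exp (K * x + w) := by
    rw [← Complex.exp_conj, hwconj]
  have hg2c : g₂ x t * (starRingEnd ℂ) (g₂ x t)
      = (r:ℂ)^2 * ((1 + a * b * Complex.exp (K * x + w)) * (1 + a * (starRingEnd ℂ) b * Complex.exp (K * x + w))) := by
    rw [hg₂, hexp]
    simp only [map_mul, map_add, map_one, Complex.conj_ofReal, hconja, hEconj]
    calc (r:ℂ) * Complex.exp (Complex.I * (φ x t : ℂ)) * (1 + a * b * Complex.exp (K * x + w)) *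
          ((r:ℂ) * (starRingEnd ℂ) (Complex.exp (Complex.I * (φ x t : ℂ))) * (1 + a * (starRingEnd ℂ) b * Complex.exp (K * x + w)))
        = (Complex.exp (Complex.I * (φ x t : ℂ)) * (starRingEnd ℂ) (Complex.exp (Complex.I * (φ x t : ℂ)))) *
          ((r:ℂ)^2 * ((1 + a * b * Complex.exp (K * x + w)) * (1 + a * (starRingEnd ℂ) b * Complex.exp (K * x + w)))) := by ring
      _ = (r:ℂ)^2 * ((1 + a * b * Complex.exp (K * x + w)) * (1 + a * (starRingEnd ℂ) b * Complex.exp (K * x + w))) := by rw [hphiconj]; ring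
  rw [hderiv1, hderiv2, hf, hexp, hg1c, hg2c]
  push_cast
  linear_combination Complex.exp (K * x + w) * h2 - (σ:ℂ) * (r:ℂ)^2 * a^2 * (Complex.exp (K * x + w))^2 * h1
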